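/- Christoffel–Darboux formula: if monic polynomials p_n satisfy p_{n+1}(x) = (x - a_n)p_n(x) - n b_n p_{n-1}(x) with p_0 = 1 and b_i ≠ 0, then for all n and all x ≠ y, (p_n(y)p_{n+1}(x) - p_{n+1}(y)p_n(x))/(x - y) = Σ_{k=0}^n (n! B_n)/(k! B_k) p_k(x) p_k(y), where B_m = b_1 b_2 ⋯ b_m (B_0 = 1). -/
import Mathlib


open Polynomial Nat

/-- Christoffel–Darboux formula for monic orthogonal polynomials defined by the
three-term recurrence `p_{n+1} = (x - aₙ)pₙ - n bₙ p_{n-1}`. -/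
theorem christoffel_darboux (a b : ℕ → ℂ) (hb : ∀ i, b i ≠ 0)
    (p : ℕ → Polynomial ℂ)
    (hp0 : p 0 = 1) (hp1 : p 1 = X - C (a 0))
    (hrec : ∀ n : ℕ, p (n + 2) =
      (X - C (a (n + 1))) * p (n + 1) - ((n + 1 : ℕ) : ℂ) • (C (b (n + 1)) * p n))
    (n : ℕ) (α β : ℂ) (hne : α ≠ β) :
    ((p n).eval β * (p (n + 1)).eval α - (p (n + 1)).eval β * (p n).eval α) / (α - β) =
      ∑ k ∈ Finset.range (n + 1),
        ((n ! : ℂ) * ∏ i ∈ Finset.Icc 1 n, b i) /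
          ((k ! : ℂ) * ∏ i ∈ Finset.Icc 1 k, b i) *
            ((p k).eval α * (p k).eval β) := by
  have hαβ : α - β ≠ 0 := sub_ne_zero.mpr hne
  have key : ∀ n : ℕ, (p n).eval β * (p (n + 1)).eval α - (p (n + 1)).eval β * (p n).eval α
      = (α - β) * ∑ k ∈ Finset.range (n + 1),
        ((n ! : ℂ) * ∏ i ∈ Finset.Icc 1 n, b i) /
          ((k ! : ℂ) * ∏ i ∈ Finset.Icc 1 k, b i) *
            ((p k).eval α * (p k).eval β) := by
    intro n
    induction n with
    | zero => simp [hp0, hp1]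
    | succ m ih =>
      have hBm : (∏ i ∈ Finset.Icc 1 (m + 1), b i)
          = (∏ i ∈ Finset.Icc 1 m, b i) * b (m + 1) := by
        rw [Finset.prod_Icc_succ_top (by omega)]
      have hB0 : ((m + 1)! : ℂ) * ∏ i ∈ Finset.Icc 1 (m + 1), b i ≠ 0 :=
        mul_ne_zero (Nat.cast_ne_zero.mpr (Nat.factorial_ne_zero _))
          (Finset.prod_ne_zero_iff.mpr fun i _ => hb i)
      have hstep : (p (m + 1)).eval β * (p (m + 2)).eval α
            - (p (m + 2)).eval β * (p (m + 1)).eval α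
          = ((m + 1 : ℕ) : ℂ) * b (m + 1) *
              ((p m).eval β * (p (m + 1)).eval α - (p (m + 1)).eval β * (p m).eval α)
            + (α - β) * ((p (m + 1)).eval α * (p (m + 1)).eval β) := by
        rw [hrec m]
        simp only [eval_sub, eval_mul, eval_smul, eval_X, eval_C, smul_eq_mul]
        ring
      have hco : ∀ k ∈ Finset.range (m + 1),
          (((m + 1)! : ℂ) * ∏ i ∈ Finset.Icc 1 (m + 1), b i) /
              ((k ! : ℂ) * ∏ i ∈ Finset.Icc 1 k, b i) *
            ((p k).eval α * (p k).eval β)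
          = ((m + 1 : ℕ) : ℂ) * b (m + 1) *
            (((m ! : ℂ) * ∏ i ∈ Finset.Icc 1 m, b i) /
                ((k ! : ℂ) * ∏ i ∈ Finset.Icc 1 k, b i) *
              ((p k).eval α * (p k).eval β)) := by
        intro k _
        have : (((m + 1)! : ℂ) * ∏ i ∈ Finset.Icc 1 (m + 1), b i)
            = ((m + 1 : ℕ) : ℂ) * b (m + 1) * ((m ! : ℂ) * ∏ i ∈ Finset.Icc 1 m, b i) := by
          rw [hBm, Nat.factorial_succ, Nat.cast_mul]
          ring
        rw [this, mul_div_assoc]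
        ring
      conv_rhs => rw [Finset.sum_range_succ]
      rw [div_self hB0, Finset.sum_congr rfl hco, ← Finset.mul_sum, hstep, ih]
      ring
  rw [div_eq_iff hαβ, key n]
  ring
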